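/- Let C ⊆ ℕ^p be an integer cone, ⪯ an admissible total order on ℕ^p, f ∈ C \ {0}, and let S be a C-semigroup with Fb(S) = f having at least one gap outside B(f). Then S ∪ {λ(S)} is a C-semigroup with Frobenius element f and (S ∪ {λ(S)}) ∩ B(f) = S ∩ B(f). -/
import Mathlib


open Set BigOperators

/-- `C` is an integer cone: the intersection with `ℕ^p` of the set of nonnegative
real linear combinations of a finite set `A ⊆ ℕ^p`. -/
def IsIntegerCone (p : ℕ) (C : Set (Fin p → ℕ)) : Prop :=
  ∃ A : Finset (Fin p → ℕ),
    C = {x : Fin p → ℕ | ∃ l : (Fin p → ℕ) → ℝ,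
      (∀ a, 0 ≤ l a) ∧ ∀ i, (x i : ℝ) = ∑ a ∈ A, l a * (a i : ℝ)}

/-- An admissible total order on `ℕ^p`: total, compatible with addition,
with `0` minimum, and with finite down-sets. -/
structure AdmissibleOrder (p : ℕ) where
  le : (Fin p → ℕ) → (Fin p → ℕ) → Prop
  le_refl : ∀ x, le x x
  le_antisymm : ∀ x y, le x y → le y x → x = y
  le_trans : ∀ x y z, le x y → le y z → le x z
  le_total : ∀ x y, le x y ∨ le y x
  add_right : ∀ x y z, le x y → le (x + z) (y + z)
  zero_le : ∀ x, le 0 x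
  finite_le : ∀ f, {x : Fin p → ℕ | le x f}.Finite

/-- Strict version of an admissible order. -/
def AdmissibleOrder.lt {p : ℕ} (O : AdmissibleOrder p) (x y : Fin p → ℕ) : Prop :=
  O.le x y ∧ x ≠ y

/-- `S` is a `C`-semigroup: a submonoid of `ℕ^p` contained in `C` with finite complement in `C`. -/
def IsCSemigroup {p : ℕ} (C S : Set (Fin p → ℕ)) : Prop :=
  S ⊆ C ∧ 0 ∈ S ∧ (∀ x ∈ S, ∀ y ∈ S, x + y ∈ S) ∧ (C \ S).Finite

/-- `f` is the Frobenius element of `S`: the `⪯`-maximum of `C \ S`. -/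
def IsFrob {p : ℕ} (O : AdmissibleOrder p) (C S : Set (Fin p → ℕ)) (f : Fin p → ℕ) : Prop :=
  f ∈ C \ S ∧ ∀ x ∈ C \ S, O.le x f

/-- `B(f) = {x ∈ C : f - x ∈ C}`. -/
def BSet {p : ℕ} (C : Set (Fin p → ℕ)) (f : Fin p → ℕ) : Set (Fin p → ℕ) :=
  {x | x ∈ C ∧ ∃ y ∈ C, x + y = f}

/-- `N(f) = #{x ∈ C \ {0} : x ⪯ f}`. -/
noncomputable def NNum {p : ℕ} (O : AdmissibleOrder p) (C : Set (Fin p → ℕ)) (f : Fin p → ℕ) : ℕ :=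
  {x | x ∈ C ∧ x ≠ 0 ∧ O.le x f}.ncard

/-- The genus of `S`: the number of gaps `#(C \ S)`. -/
noncomputable def genusOf {p : ℕ} (C S : Set (Fin p → ℕ)) : ℕ := (C \ S).ncard

/-- The number of small elements `n(S) = #{s ∈ S : s ≺ Fb(S)}`; an element is smaller than
the Frobenius element iff it is strictly smaller than some gap. -/
noncomputable def smallCount {p : ℕ} (O : AdmissibleOrder p) (C S : Set (Fin p → ℕ)) : ℕ :=
  {s | s ∈ S ∧ ∃ h ∈ C \ S, O.lt s h}.ncard

/-- The minimal generating set of `S`. -/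
def msg {p : ℕ} (S : Set (Fin p → ℕ)) : Set (Fin p → ℕ) :=
  (S \ {0}) \ {x | ∃ a ∈ S \ {0}, ∃ b ∈ S \ {0}, a + b = x}

/-- `S` is a `B`-semigroup with respect to `f`. -/
def IsBSemigroup {p : ℕ} (O : AdmissibleOrder p) (C S : Set (Fin p → ℕ)) (f : Fin p → ℕ) : Prop :=
  IsCSemigroup C S ∧ IsFrob O C S f ∧ C \ BSet C f ⊆ S

/-- `a = α(S)`, the `⪯`-minimum of `(S \ {0}) ∩ B(f)`, with the convention `α(S) = f`
when `S ∩ B(f) = {0}`. -/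
def IsAlpha {p : ℕ} (O : AdmissibleOrder p) (C S : Set (Fin p → ℕ)) (f a : Fin p → ℕ) : Prop :=
  (a ∈ S ∧ a ≠ 0 ∧ a ∈ BSet C f ∧ ∀ x ∈ S, x ≠ 0 → x ∈ BSet C f → O.le a x)
  ∨ ((∀ x ∈ S ∩ BSet C f, x = 0) ∧ a = f)

/-- `x` is a special gap of `T`. -/
def SpecialGap {p : ℕ} (C T : Set (Fin p → ℕ)) (x : Fin p → ℕ) : Prop :=
  x ∈ C \ T ∧ x + x ∈ T ∧ ∀ t ∈ T, t ≠ 0 → x + t ∈ T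

/-- `l = λ(S)`, the `⪯`-largest gap of `S` lying outside `B(f)` (no convention case). -/
def IsLambdaGap {p : ℕ} (O : AdmissibleOrder p) (C S : Set (Fin p → ℕ)) (f l : Fin p → ℕ) : Prop :=
  l ∈ C \ S ∧ l ∉ BSet C f ∧ ∀ x ∈ C \ S, x ∉ BSet C f → O.le x l

/-- `l = λ(S)`, with the convention `λ(S) = 0` when `S` has no gap outside `B(f)`. -/
def IsLambda {p : ℕ} (O : AdmissibleOrder p) (C S : Set (Fin p → ℕ)) (f l : Fin p → ℕ) : Prop :=
  IsLambdaGap O C S f l ∨ ((∀ x ∈ C \ S, x ∈ BSet C f) ∧ l = 0)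

/-- `x ≤_C y` iff `y - x ∈ C`. -/
def leC {p : ℕ} (C : Set (Fin p → ℕ)) (x y : Fin p → ℕ) : Prop := ∃ d ∈ C, x + d = y

/-- The ordinary `C`-semigroup `S_c = {0} ∪ {x ∈ C : c ⪯ x}`. -/
def ordinarySemigroup {p : ℕ} (O : AdmissibleOrder p) (C : Set (Fin p → ℕ))
    (c : Fin p → ℕ) : Set (Fin p → ℕ) :=
  insert 0 {x | x ∈ C ∧ O.le c x}

/-- `S` is an arf semigroup in `C`. -/
def ArfSemigroup {p : ℕ} (C S : Set (Fin p → ℕ)) : Prop :=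
  ∀ x ∈ S, ∀ y ∈ S, ∀ z ∈ S, leC C z y → leC C y x →
    ∀ w : Fin p → ℕ, w + z = x + y → w ∈ S

/-- `S` is a saturated semigroup in `C`: whenever `s, s₁, …, s_r ∈ S` with `s_i ≤_C s`,
and `z : Fin r → ℤ` with `z₁s₁ + ⋯ + z_rs_r ∈ C` (as an element `t` of `ℕ^p`),
then `s + z₁s₁ + ⋯ + z_rs_r = s + t ∈ S`. -/
def SaturatedSemigroup {p : ℕ} (C S : Set (Fin p → ℕ)) : Prop :=
  ∀ (r : ℕ) (s : Fin p → ℕ) (si : Fin r → (Fin p → ℕ)) (z : Fin r → ℤ),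
    s ∈ S → (∀ i, si i ∈ S) → (∀ i, leC C (si i) s) →
    ∀ t ∈ C, (∀ j, (t j : ℤ) = ∑ i, z i * (si i j : ℤ)) → s + t ∈ S

/-- If S is a C-semigroup with Fb(S) = f having a gap outside B(f), then S ∪ {λ(S)} is a
C-semigroup with Frobenius element f and the same intersection with B(f). -/
theorem statement9 (p : ℕ) (hp : 0 < p) (C : Set (Fin p → ℕ)) (hC : IsIntegerCone p C)
    (O : AdmissibleOrder p) (f : Fin p → ℕ) (hfC : f ∈ C) (hf0 : f ≠ 0)
    (S : Set (Fin p → ℕ)) (hS : IsCSemigroup C S) (hF : IsFrob O C S f)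
    (hgap : ∃ x ∈ C \ S, x ∉ BSet C f)
    (l : Fin p → ℕ) (hl : IsLambdaGap O C S f l) :
    IsCSemigroup C (insert l S) ∧ IsFrob O C (insert l S) f ∧
      (insert l S) ∩ BSet C f = S ∩ BSet C f := by
  obtain ⟨hSC, h0S, hadd, hfin⟩ := hS
  obtain ⟨hlCS, hlB, hlmax⟩ := hl
  obtain ⟨A, hA⟩ := hC
  have hCadd : ∀ x ∈ C, ∀ y ∈ C, x + y ∈ C := by
    intro x hx y hy
    rw [hA] at hx hy ⊢
    obtain ⟨lx, hlx0, hlx⟩ := hx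
    obtain ⟨ly, hly0, hly⟩ := hy
    refine ⟨fun a => lx a + ly a, fun a => add_nonneg (hlx0 a) (hly0 a), fun i => ?_⟩
    have : ((x + y) i : ℝ) = (x i : ℝ) + (y i : ℝ) := by push_cast [Pi.add_apply]; ring
    rw [this, hlx i, hly i, ← Finset.sum_add_distrib]
    exact Finset.sum_congr rfl (fun a _ => by ring)
  have hlC : l ∈ C := hlCS.1
  have key : ∀ x ∈ C, l + x ∈ insert l S := by
    intro x hx
    by_cases hxs : l + x ∈ S
    · exact Set.mem_insert_of_mem _ hxs
    · have hmem : l + x ∈ C \ S := ⟨hCadd l hlC x hx, hxs⟩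
      have hnB : l + x ∉ BSet C f := by
        rintro ⟨_, y, hyC, hxy⟩
        exact hlB ⟨hlC, x + y, hCadd x hx y hyC, by rw [← hxy]; ring⟩
      have h1 := hlmax (l + x) hmem hnB
      have h2 : O.le l (l + x) := by
        have := O.add_right 0 x l (O.zero_le x)
        simpa [add_comm] using this
      have heq : l + x = l := O.le_antisymm _ _ h1 h2
      rw [heq]; exact Set.mem_insert _ _
  have hsub : insert l S ⊆ C := by
    intro x hx
    rcases hx with rfl | hx
    · exact hlC
    · exact hSC hx
  have hclosed : ∀ x ∈ insert l S, ∀ y ∈ insert l S, x + y ∈ insert l S := by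
    intro x hx y hy
    rcases hx with rfl | hx
    · exact key y (hsub hy)
    · rcases hy with rfl | hy
      · rw [add_comm]; exact key x (hSC hx)
      · exact Set.mem_insert_of_mem _ (hadd x hx y hy)
  have h0C : (0 : Fin p → ℕ) ∈ C := hSC h0S
  have hfB : f ∈ BSet C f := ⟨hfC, 0, h0C, by simp⟩
  have hfl : f ≠ l := fun h => hlB (h ▸ hfB)
  refine ⟨⟨hsub, Set.mem_insert_of_mem _ h0S, hclosed,
      hfin.subset (fun x hx => ⟨hx.1, fun h => hx.2 (Set.mem_insert_of_mem _ h)⟩)⟩,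
    ⟨⟨hF.1.1, ?_⟩, fun x hx => hF.2 x ⟨hx.1, fun h => hx.2 (Set.mem_insert_of_mem _ h)⟩⟩, ?_⟩
  · rintro (h | h)
    · exact hfl h
    · exact hF.1.2 h
  · ext x
    constructor
    · rintro ⟨hx, hxB⟩
      rcases hx with rfl | hx
      · exact absurd hxB hlB
      · exact ⟨hx, hxB⟩
    · rintro ⟨hx, hxB⟩
      exact ⟨Set.mem_insert_of_mem _ hx, hxB⟩
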